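/- arXiv:1507.06749 — 4 statements merged into one kernel-verified Lean document; each statement's English description precedes it below -/
import Mathlib

section
/- Let m ≥ 4 and n ≥ 1, and let T be a triangulation of the grid-covered cylinder graph G_{m,n} in which every layer L_i (2 ≤ i ≤ n) has all its cells of the same type. Then the orientation O of T defined as follows is semi-transitive: (1) horizontal edges: for all 0 ≤ x ≤ n, orient v_{x0} → v_{x(m−1)}, v_{x(m−1)} → v_{x(m−2)}, and v_{xy} → v_{x(y+1)} for 0 ≤ y ≤ m−3; (2) each diagonal edge is oriented in the same direction as the horizontal edges of the cell it belongs to (i.e., all horizontal and diagonal edges within a sector have the same direction); (3) vertical edges: orient v_{0y} → v_{1y} for all 0 ≤ y ≤ m−1, and for 1 ≤ x ≤ n−1 and 0 ≤ y ≤ m−1, the edge between v_{xy} and v_{(x+1)y} is given the same direction as the edge between v_{(x−1)y} and v_{xy} if layer L_{x+1} is of type A, and the opposite direction if L_{x+1} is of type B. -/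
/-- `D` is an orientation of `G`: each edge gets exactly one direction. -/
def IsOrientation {V : Type*} (G : SimpleGraph V) (D : V → V → Prop) : Prop :=
  (∀ x y, D x y → ¬ D y x) ∧ (∀ x y, G.Adj x y ↔ (D x y ∨ D y x))

/-- A digraph is acyclic: no directed cycle. -/
def DigraphAcyclic {V : Type*} (D : V → V → Prop) : Prop :=
  ∀ v, ¬ Relation.TransGen D v v

/-- For every directed path `v 0 → v 1 → ... → v k`, if the arc `v 0 → v k` is present then
all arcs `v i → v j` for `i < j` are present. -/
def ShortcutFree {V : Type*} (D : V → V → Prop) : Prop :=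
  ∀ (k : ℕ) (v : Fin (k + 1) → V),
    (∀ i : Fin k, D (v i.castSucc) (v i.succ)) →
    D (v 0) (v (Fin.last k)) →
    ∀ i j : Fin (k + 1), i < j → D (v i) (v j)

/-- A semi-transitive orientation is acyclic and shortcut-free. -/
def SemiTransitive {V : Type*} (D : V → V → Prop) : Prop :=
  DigraphAcyclic D ∧ ShortcutFree D

/-- The grid-covered cylinder graph `G_{m,n}` on vertices `(i, j)` with level
`i ∈ {0,...,n}` and column `j ∈ {0,...,m-1}`: horizontal edges join `(i, j)` and
`(i, (j+1) mod m)`, vertical edges join `(i, j)` and `(i+1, j)`. -/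
def gccg (m n : ℕ) : SimpleGraph (Fin (n + 1) × Fin m) where
  Adj u v := u ≠ v ∧
    ((u.1 = v.1 ∧ ((u.2.val + 1) % m = v.2.val ∨ (v.2.val + 1) % m = u.2.val)) ∨
     (u.2 = v.2 ∧ (u.1.val + 1 = v.1.val ∨ v.1.val + 1 = u.1.val)))
  symm := by
    refine ⟨?_⟩
    rintro u v ⟨hne, h | h⟩
    · exact ⟨hne.symm, Or.inl ⟨h.1.symm, h.2.symm⟩⟩
    · exact ⟨hne.symm, Or.inr ⟨h.1.symm, h.2.symm⟩⟩
  loopless := ⟨fun u h => h.1 rfl⟩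

/-- The two endpoints (as `(level, column)` pairs) of the chosen diagonal of the cell with
lower-left corner `(i, j)`: `true` selects the diagonal `(i,j)—(i+1,(j+1) mod m)`, and
`false` selects the diagonal `(i+1,j)—(i,(j+1) mod m)`. -/
def cellDiag (m : ℕ) (b : Bool) (i j : ℕ) : (ℕ × ℕ) × (ℕ × ℕ) :=
  if b then ((i, j), (i + 1, (j + 1) % m)) else ((i + 1, j), (i, (j + 1) % m))

/-- `u` and `v` (as `(level, column)` pairs) are the endpoints of the diagonal added to
some cell, where `d i j = some b` means the cell `(i, j)` gets the diagonal selected by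
`b`, and `d i j = none` means the cell `(i, j)` gets no diagonal. -/
def DiagAdj (m n : ℕ) (d : ℕ → ℕ → Option Bool) (u v : ℕ × ℕ) : Prop :=
  ∃ i < n, ∃ j < m, ∃ b : Bool, d i j = some b ∧
    ((u, v) = cellDiag m b i j ∨ (v, u) = cellDiag m b i j)

/-- The graph obtained from the grid-covered cylinder graph `G_{m,n}` by adding, in each
cell `(i,j)` with `d i j = some b`, the diagonal selected by `b` (cells with
`d i j = none` are left untriangulated). -/
def ptri (m n : ℕ) (d : ℕ → ℕ → Option Bool) : SimpleGraph (Fin (n + 1) × Fin m) where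
  Adj u v := (gccg m n).Adj u v ∨ DiagAdj m n d (u.1.val, u.2.val) (v.1.val, v.2.val)
  symm := by
    refine ⟨?_⟩
    rintro u v (h | ⟨i, hi, j, hj, b, hb, h⟩)
    · exact Or.inl ((gccg m n).adj_symm h)
    · exact Or.inr ⟨i, hi, j, hj, b, hb, h.symm⟩
  loopless := by
    refine ⟨?_⟩
    rintro u (h | ⟨i, hi, j, hj, b, hb, h⟩)
    · exact (gccg m n).irrefl h
    · rcases h with h | h <;> cases b <;> simp [cellDiag] at h <;> omega

/-- A (full) triangulation of the grid-covered cylinder graph `G_{m,n}`: every cell gets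
exactly one diagonal, chosen by `d`. -/
def tri (m n : ℕ) (d : ℕ → ℕ → Bool) : SimpleGraph (Fin (n + 1) × Fin m) :=
  ptri m n (fun i j => some (d i j))

/-- The set of the two endpoints (as `(level, column)` pairs) of the diagonal of cell
`(i, j)` in the full triangulation determined by `d`. -/
def diagEndsSet (m : ℕ) (d : ℕ → ℕ → Bool) (i j : ℕ) : Set (ℕ × ℕ) :=
  if d i j then {(i, j), (i + 1, (j + 1) % m)} else {(i + 1, j), (i, (j + 1) % m)}

/-- Cell `(i, j)` (meaningful for `1 ≤ i`, i.e. for cells on layers `L 2, ..., L n`) is of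
type A if its diagonal has no vertex in common with the diagonal of the cell `(i-1, j)`
directly below it; it is of type B otherwise. -/
def CellTypeA (m : ℕ) (d : ℕ → ℕ → Bool) (i j : ℕ) : Prop :=
  ∀ p ∈ diagEndsSet m d i j, p ∉ diagEndsSet m d (i - 1) j

/-- The column at which the oriented horizontal edges of sector `j` (the sector whose
horizontal edges join columns `j` and `(j+1) mod m`) start: the horizontal arcs are
`v x 0 → v x (m-1)`, `v x (m-1) → v x (m-2)` and `v x y → v x (y+1)` for `y ≤ m - 3`. -/
def hsrc (m j : ℕ) : ℕ :=
  if j = m - 1 then 0 else if j = m - 2 then m - 1 else j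

/-- The column at which the oriented horizontal edges of sector `j` end. -/
def hdst (m j : ℕ) : ℕ :=
  if j = m - 1 then m - 1 else if j = m - 2 then m - 2 else j + 1

/-- The level of the endpoint of the diagonal of cell `(i, j)` that lies on column `c`
(meaningful for `c ∈ {j, (j+1) mod m}`, the two columns of sector `j`). -/
def diagLevel (d : ℕ → ℕ → Bool) (i j c : ℕ) : ℕ :=
  if c = j then (if d i j then i else i + 1) else (if d i j then i + 1 else i)

/-- A layer (given by its cell index `x`, i.e. layer `L (x+1)`) is of type A if all of its
cells are of type A. -/
def LayerTypeA (m : ℕ) (d : ℕ → ℕ → Bool) (x : ℕ) : Prop :=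
  ∀ j < m, CellTypeA m d x j

open Classical in
/-- The direction of the vertical edges between levels `x` and `x + 1` in the orientation
`O`: `true` means upward (`v x y → v (x+1) y`), `false` means downward. The edges
`v 0 y → v 1 y` point upward, and the direction is kept when passing to a layer of type A
and reversed when passing to a layer of type B. -/
noncomputable def vdir (m : ℕ) (d : ℕ → ℕ → Bool) : ℕ → Bool
  | 0 => true
  | x + 1 => if LayerTypeA m d (x + 1) then vdir m d x else !(vdir m d x)

/-- The orientation `O` of the triangulation `tri m n d`: horizontal edges are oriented
`v x 0 → v x (m-1)`, `v x (m-1) → v x (m-2)` and `v x y → v x (y+1)` for `0 ≤ y ≤ m-3`;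
every diagonal edge is oriented in the same direction (from column `hsrc m j` to column
`hdst m j`) as the horizontal edges of the sector of the cell it belongs to; vertical
edges are oriented according to `vdir`. -/
def Orient (m n : ℕ) (d : ℕ → ℕ → Bool) (u v : Fin (n + 1) × Fin m) : Prop :=
  -- horizontal arcs
  (u.1 = v.1 ∧ ((u.2.val = 0 ∧ v.2.val = m - 1) ∨ (u.2.val = m - 1 ∧ v.2.val = m - 2) ∨
      (u.2.val + 2 ≤ m - 1 ∧ v.2.val = u.2.val + 1))) ∨
  -- diagonal arcs
  (∃ i < n, ∃ j < m,
      u.2.val = hsrc m j ∧ v.2.val = hdst m j ∧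
      u.1.val = diagLevel d i j (hsrc m j) ∧ v.1.val = diagLevel d i j (hdst m j)) ∨
  -- vertical arcs
  (u.2 = v.2 ∧ ((v.1.val = u.1.val + 1 ∧ vdir m d u.1.val = true) ∨
                (u.1.val = v.1.val + 1 ∧ vdir m d v.1.val = false)))


namespace GCCAux

variable {m n : ℕ} {d : ℕ → ℕ → Bool}

lemma mod_succ_cases (hm : 2 ≤ m) {j : ℕ} (hj : j < m) :
    ((j + 1) % m = j + 1 ∧ j + 1 < m) ∨ (j = m - 1 ∧ (j + 1) % m = 0) := by
  rcases Nat.lt_or_ge (j+1) m with h | h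
  · exact Or.inl ⟨Nat.mod_eq_of_lt h, h⟩
  · have hjm : j + 1 = m := by omega
    right
    constructor
    · omega
    · rw [hjm, Nat.mod_self]

/-- rank 1 : sends m-1 to 1 -/
def r1 (m y : ℕ) : ℕ := if y = m - 1 then 1 else y
/-- rank 2 : sends m-1 to m-3 -/
def r2 (m y : ℕ) : ℕ := if y = m - 1 then m - 3 else y

lemma sector_facts (hm : 4 ≤ m) {j : ℕ} (hj : j < m) :
    r1 m (hsrc m j) < r1 m (hdst m j) ∧ r2 m (hsrc m j) < r2 m (hdst m j) ∧
    (r1 m (hdst m j) = r1 m (hsrc m j) + 1 ∨ r2 m (hdst m j) = r2 m (hsrc m j) + 1) ∧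
    hsrc m j ≠ hdst m j ∧ hsrc m j < m ∧ hdst m j < m := by
  simp only [hsrc, hdst, r1, r2]
  split_ifs <;> omega

lemma sector_inj (hm : 4 ≤ m) {j j' : ℕ} (hj : j < m) (hj' : j' < m)
    (h1 : hsrc m j = hsrc m j') (h2 : hdst m j = hdst m j') : j = j' := by
  simp only [hsrc, hdst] at h1 h2
  split_ifs at h1 h2 <;> omega

/-- potential on levels -/
noncomputable def gf (m : ℕ) (d : ℕ → ℕ → Bool) : ℕ → ℤ
  | 0 => 0
  | x+1 => gf m d x + (if vdir m d x then 1 else -1)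

lemma gf_succ (x : ℕ) : gf m d (x+1) = gf m d x + (if vdir m d x then 1 else -1) := rfl

lemma gf_up {x : ℕ} (h : vdir m d x = true) : gf m d (x+1) = gf m d x + 1 := by
  rw [gf_succ, h]; simp

lemma gf_down {x : ℕ} (h : vdir m d x = false) : gf m d (x+1) = gf m d x - 1 := by
  rw [gf_succ, h]; simp; ring

lemma gf_adj {x y : ℕ} (h : y = x + 1 ∨ x = y + 1) :
    gf m d y ≤ gf m d x + 1 ∧ gf m d x ≤ gf m d y + 1 := by
  rcases h with h | h <;> subst h
  · rcases Bool.eq_false_or_eq_true (vdir m d x) with hv | hv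
    · rw [gf_up hv]; omega
    · rw [gf_down hv]; omega
  · rcases Bool.eq_false_or_eq_true (vdir m d y) with hv | hv
    · rw [gf_up hv]; omega
    · rw [gf_down hv]; omega


section ArcLemmas
variable (hm : 4 ≤ m)

/-- abbreviation: level of hsrc-end of diagonal of cell (i,j) -/
def sA (m : ℕ) (d : ℕ → ℕ → Bool) (i j : ℕ) : ℕ := diagLevel d i j (hsrc m j)
def sB (m : ℕ) (d : ℕ → ℕ → Bool) (i j : ℕ) : ℕ := diagLevel d i j (hdst m j)

lemma hsrc_j_cases (hm : 4 ≤ m) {j : ℕ} (hj : j < m) :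
    (hsrc m j = j ∧ hdst m j ≠ j) ∨ (hsrc m j ≠ j ∧ hdst m j = j) := by
  simp only [hsrc, hdst]; split_ifs <;> omega

lemma sAB_spec (hm : 4 ≤ m) {j : ℕ} (hj : j < m) (i : ℕ) :
    (d i j = true → (sA m d i j = i ∧ sB m d i j = i + 1) ∨ (sA m d i j = i + 1 ∧ sB m d i j = i)) ∧
    (d i j = false → (sA m d i j = i ∧ sB m d i j = i + 1) ∨ (sA m d i j = i + 1 ∧ sB m d i j = i)) ∧
    sA m d i j + sB m d i j = 2 * i + 1 ∧
    ((sA m d i j = i ∧ sB m d i j = i+1) ∨ (sA m d i j = i+1 ∧ sB m d i j = i)) := by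
  rcases hsrc_j_cases hm hj with ⟨h1, h2⟩ | ⟨h1, h2⟩ <;>
    rcases Bool.eq_false_or_eq_true (d i j) with hb | hb <;>
      simp [sA, sB, diagLevel, h1, h2, hb] <;> omega

lemma sAB_sum (hm : 4 ≤ m) {j : ℕ} (hj : j < m) (i : ℕ) :
    sA m d i j + sB m d i j = 2 * i + 1 := (sAB_spec hm hj i).2.2.1

lemma sAB_cases (hm : 4 ≤ m) {j : ℕ} (hj : j < m) (i : ℕ) :
    (sA m d i j = i ∧ sB m d i j = i+1) ∨ (sA m d i j = i+1 ∧ sB m d i j = i) :=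
  (sAB_spec hm hj i).2.2.2

/-- structural dichotomy for arcs of the orientation -/
lemma arc_cases (hm : 4 ≤ m) {u v : Fin (n+1) × Fin m} (h : Orient m n d u v) :
    (u.2 = v.2 ∧ ((v.1.val = u.1.val + 1 ∧ vdir m d u.1.val = true) ∨
        (u.1.val = v.1.val + 1 ∧ vdir m d v.1.val = false))) ∨
    (∃ j, j < m ∧ u.2.val = hsrc m j ∧ v.2.val = hdst m j ∧
        (u.1 = v.1 ∨ ∃ i, i < n ∧ u.1.val = sA m d i j ∧ v.1.val = sB m d i j)) := by
  rcases h with ⟨h1, h2⟩ | ⟨i, hi, j, hj, h1, h2, h3, h4⟩ | ⟨h1, h2⟩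
  · right
    rcases h2 with ⟨hu, hv⟩ | ⟨hu, hv⟩ | ⟨hu, hv⟩
    · refine ⟨m - 1, by omega, ?_, ?_, Or.inl h1⟩ <;> simp only [hsrc, hdst] <;>
        split_ifs <;> omega
    · refine ⟨m - 2, by omega, ?_, ?_, Or.inl h1⟩ <;> simp only [hsrc, hdst] <;>
        split_ifs <;> omega
    · refine ⟨u.2.val, by omega, ?_, ?_, Or.inl h1⟩ <;> simp only [hsrc, hdst] <;>
        split_ifs <;> omega
  · exact Or.inr ⟨j, hj, h1, h2, Or.inr ⟨i, hi, h3, h4⟩⟩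
  · exact Or.inl ⟨h1, h2⟩

/-- numeric consequences of an arc -/
lemma arc_num (hm : 4 ≤ m) {u v : Fin (n+1) × Fin m} (h : Orient m n d u v) :
    (u.2 = v.2 ∧ gf m d v.1.val = gf m d u.1.val + 1 ∧ r1 m v.2.val = r1 m u.2.val ∧
     r2 m v.2.val = r2 m u.2.val ∧ u.2.val = v.2.val) ∨
    (r1 m v.2.val ≥ r1 m u.2.val + 1 ∧ r2 m v.2.val ≥ r2 m u.2.val + 1 ∧
     (r1 m v.2.val ≤ r1 m u.2.val + 1 ∨ r2 m v.2.val ≤ r2 m u.2.val + 1) ∧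
     gf m d v.1.val ≥ gf m d u.1.val - 1 ∧ gf m d v.1.val ≤ gf m d u.1.val + 1 ∧
     u.2.val ≠ v.2.val) := by
  rcases arc_cases hm h with ⟨hc, hd⟩ | ⟨j, hj, hs, hdd, hlev⟩
  · left
    refine ⟨hc, ?_, by rw [hc], by rw [hc], by rw [hc]⟩
    rcases hd with ⟨h1, h2⟩ | ⟨h1, h2⟩
    · rw [h1, gf_up h2]
    · rw [h1, gf_down h2]; ring
  · right
    obtain ⟨f1, f2, f3, f4, _, _⟩ := sector_facts hm hj
    rw [hs, hdd]
    refine ⟨by omega, by omega, by omega, ?_, ?_, by omega⟩ <;>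
    · rcases hlev with hl | ⟨i, hi, ha, hb⟩
      · rw [hl]; omega
      · have hsum := sAB_sum (d := d) hm hj i
        have hcs := sAB_cases (d := d) hm hj i
        have := gf_adj (m := m) (d := d) (x := u.1.val) (y := v.1.val) (by omega)
        omega
end ArcLemmas


section Chain
set_option maxHeartbeats 1000000 in
/-- invariant along a directed path -/
lemma chain_inv (hm : 4 ≤ m) {k : ℕ} (w : ℕ → Fin (n+1) × Fin m)
    (hc : ∀ t, t < k → Orient m n d (w t) (w (t+1))) :
    ∀ t, t ≤ k →
      ((w t).2 = (w 0).2 ∧ gf m d (w t).1.val = gf m d (w 0).1.val + t) ∨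
      (r1 m (w t).2.val ≥ r1 m (w 0).2.val + 1 ∧
       r2 m (w t).2.val ≥ r2 m (w 0).2.val + 1 ∧
       gf m d (w t).1.val ≥ gf m d (w 0).1.val + t - 2) ∨
      (r1 m (w t).2.val ≥ r1 m (w 0).2.val + 2 ∧
       r2 m (w t).2.val ≥ r2 m (w 0).2.val + 2) := by
  intro t
  induction t with
  | zero => intro _; left; simp
  | succ t ih =>
    intro ht
    have harc := hc t (by omega)
    rcases arc_num hm harc with ⟨hcol, hg, -, -, -⟩ | ⟨hr1, hr2, _, hg1, _, _⟩ <;>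
      rcases ih (by omega) with ⟨icol, ig⟩ | ⟨ir1, ir2, ig⟩ | ⟨ir1, ir2⟩
    · left
      rw [hcol] at icol
      refine ⟨icol, by rw [hg, ig]; push_cast; ring⟩
    · right; left
      rw [← hcol]
      refine ⟨ir1, ir2, by rw [hg]; push_cast; push_cast at ig; omega⟩
    · right; right
      rw [← hcol]
      exact ⟨ir1, ir2⟩
    · right; left
      rw [icol] at hr1 hr2
      refine ⟨by omega, by omega, by push_cast; push_cast at ig; omega⟩
    · right; right
      exact ⟨by omega, by omega⟩
    · right; right
      exact ⟨by omega, by omega⟩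

lemma k_le_three_nat (hm : 4 ≤ m) {k : ℕ} (w : ℕ → Fin (n+1) × Fin m)
    (hc : ∀ t, t < k → Orient m n d (w t) (w (t+1)))
    (h0k : Orient m n d (w 0) (w k)) : k ≤ 3 := by
  have hinv := chain_inv hm w hc k (le_refl k)
  rcases arc_num hm h0k with ⟨hcol, hg, -, -, -⟩ | ⟨hr1, hr2, hmin, hg1, hg2, hne⟩ <;>
    rcases hinv with ⟨icol, ig⟩ | ⟨ir1, ir2, ig⟩ | ⟨ir1, ir2⟩
  · rw [hg] at ig; push_cast at ig; omega
  · rw [← hcol] at ir1; omega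
  · rw [← hcol] at ir1; omega
  · rw [icol] at hne; simp at hne
  · push_cast at ig; omega
  · rcases hmin with hmin | hmin <;> omega
end Chain


section Acyclic
/-- global potential -/
noncomputable def F (m n : ℕ) (d : ℕ → ℕ → Bool) (u : Fin (n+1) × Fin m) : ℤ :=
  (2*n+4 : ℤ) * r1 m u.2.val + gf m d u.1.val

lemma arc_F (hm : 4 ≤ m) {u v : Fin (n+1) × Fin m} (h : Orient m n d u v) :
    F m n d u < F m n d v := by
  unfold F
  rcases arc_num hm h with ⟨hcol, hg, -, -, -⟩ | ⟨hr1, hr2, _, hg1, _, _⟩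
  · rw [hcol, hg]; omega
  · have hr : (r1 m u.2.val : ℤ) + 1 ≤ (r1 m v.2.val : ℤ) := by exact_mod_cast hr1
    nlinarith [hr, hg1, (show (0:ℤ) ≤ 2*n+4 by positivity)]

lemma orient_asymm (hm : 4 ≤ m) {u v : Fin (n+1) × Fin m} (h : Orient m n d u v) :
    ¬ Orient m n d v u := fun h' => absurd (arc_F hm h') (not_lt.2 (le_of_lt (arc_F hm h)))

lemma orient_acyclic (hm : 4 ≤ m) : DigraphAcyclic (Orient m n d) := by
  intro u hcyc
  have key : ∀ a b : Fin (n+1) × Fin m, Relation.TransGen (Orient m n d) a b →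
      F m n d a < F m n d b := by
    intro a b hab
    induction hab with
    | single h => exact arc_F hm h
    | tail _ h ih => exact lt_trans ih (arc_F hm h)
  exact absurd (key u u hcyc) (lt_irrefl _)
end Acyclic


section Orientation

lemma diagLevel_at_j {i j : ℕ} : diagLevel d i j j = if d i j then i else i+1 := by
  simp [diagLevel]

lemma diagLevel_at_ne {i j c : ℕ} (h : c ≠ j) :
    diagLevel d i j c = if d i j then i+1 else i := by
  simp [diagLevel, h]

lemma sector_cols (hm : 4 ≤ m) {j : ℕ} (hj : j < m) :
    (hsrc m j = j ∧ hdst m j = (j+1)%m ∧ hdst m j ≠ j) ∨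
    (hsrc m j = (j+1)%m ∧ hdst m j = j ∧ hsrc m j ≠ j) := by
  rcases mod_succ_cases (by omega) hj with ⟨h1, h2⟩ | ⟨h1, h2⟩ <;>
    simp only [hsrc, hdst] <;> split_ifs <;> omega

lemma diag_orient {i j : ℕ} (hi : i < n) (hj : j < m) {p q : Fin (n+1) × Fin m}
    (h2p : p.2.val = hsrc m j) (h2q : q.2.val = hdst m j)
    (h1p : p.1.val = diagLevel d i j (hsrc m j)) (h1q : q.1.val = diagLevel d i j (hdst m j)) :
    Orient m n d p q := Or.inr (Or.inl ⟨i, hi, j, hj, h2p, h2q, h1p, h1q⟩)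

lemma ne_of_col {p q : Fin (n+1) × Fin m} (h : p.2.val ≠ q.2.val) : p ≠ q :=
  fun he => h (by rw [he])

lemma ne_of_lev {p q : Fin (n+1) × Fin m} (h : p.1.val ≠ q.1.val) : p ≠ q :=
  fun he => h (by rw [he])

lemma orient_total (hm : 4 ≤ m) (u v : Fin (n+1) × Fin m) :
    (tri m n d).Adj u v ↔ Orient m n d u v ∨ Orient m n d v u := by
  constructor
  · rintro (⟨hne, ⟨h1, hmod⟩ | ⟨h2, hlev⟩⟩ | ⟨i, hi, j, hj, b, hb, hpair⟩)
    · -- horizontal edge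
      rcases hmod with hmu | hmu
      · rcases mod_succ_cases (by omega) u.2.isLt with ⟨e1, e2⟩ | ⟨e1, e2⟩
        · rcases Nat.lt_or_ge u.2.val (m-2) with hlt | hge
          · exact Or.inl (Or.inl ⟨h1, Or.inr (Or.inr ⟨by omega, by omega⟩)⟩)
          · exact Or.inr (Or.inl ⟨h1.symm, Or.inr (Or.inl ⟨by omega, by omega⟩)⟩)
        · exact Or.inr (Or.inl ⟨h1.symm, Or.inl ⟨by omega, by omega⟩⟩)
      · rcases mod_succ_cases (by omega) v.2.isLt with ⟨e1, e2⟩ | ⟨e1, e2⟩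
        · rcases Nat.lt_or_ge v.2.val (m-2) with hlt | hge
          · exact Or.inr (Or.inl ⟨h1.symm, Or.inr (Or.inr ⟨by omega, by omega⟩)⟩)
          · exact Or.inl (Or.inl ⟨h1, Or.inr (Or.inl ⟨by omega, by omega⟩)⟩)
        · exact Or.inl (Or.inl ⟨h1, Or.inl ⟨by omega, by omega⟩⟩)
    · -- vertical edge
      rcases hlev with hl | hl
      · rcases Bool.eq_false_or_eq_true (vdir m d u.1.val) with hv | hv
        · exact Or.inl (Or.inr (Or.inr ⟨h2, Or.inl ⟨hl.symm, hv⟩⟩))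
        · exact Or.inr (Or.inr (Or.inr ⟨h2.symm, Or.inr ⟨hl.symm, hv⟩⟩))
      · rcases Bool.eq_false_or_eq_true (vdir m d v.1.val) with hv | hv
        · exact Or.inr (Or.inr (Or.inr ⟨h2.symm, Or.inl ⟨hl.symm, hv⟩⟩))
        · exact Or.inl (Or.inr (Or.inr ⟨h2, Or.inr ⟨hl.symm, hv⟩⟩))
    · -- diagonal edge
      have hb' : d i j = b := by simpa using hb
      subst hb'
      rcases sector_cols hm hj with ⟨e1, e2, e3⟩ | ⟨e1, e2, e3⟩
      · rcases hpair with hp | hp <;> cases hd : d i j <;>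
          simp [cellDiag, hd, Prod.ext_iff] at hp
        · exact Or.inl (diag_orient hi hj (by omega) (by omega)
            (by rw [e1, diagLevel_at_j]; simp [hd]; omega)
            (by rw [e2, diagLevel_at_ne (e2 ▸ e3)]; simp [hd]; omega))
        · exact Or.inl (diag_orient hi hj (by omega) (by omega)
            (by rw [e1, diagLevel_at_j]; simp [hd]; omega)
            (by rw [e2, diagLevel_at_ne (e2 ▸ e3)]; simp [hd]; omega))
        · exact Or.inr (diag_orient hi hj (by omega) (by omega)
            (by rw [e1, diagLevel_at_j]; simp [hd]; omega)
            (by rw [e2, diagLevel_at_ne (e2 ▸ e3)]; simp [hd]; omega))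
        · exact Or.inr (diag_orient hi hj (by omega) (by omega)
            (by rw [e1, diagLevel_at_j]; simp [hd]; omega)
            (by rw [e2, diagLevel_at_ne (e2 ▸ e3)]; simp [hd]; omega))
      · rcases hpair with hp | hp <;> cases hd : d i j <;>
          simp [cellDiag, hd, Prod.ext_iff] at hp
        · exact Or.inr (diag_orient hi hj (by omega) (by omega)
            (by rw [e1, diagLevel_at_ne (e1 ▸ e3)]; simp [hd]; omega)
            (by rw [e2, diagLevel_at_j]; simp [hd]; omega))
        · exact Or.inr (diag_orient hi hj (by omega) (by omega)
            (by rw [e1, diagLevel_at_ne (e1 ▸ e3)]; simp [hd]; omega)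
            (by rw [e2, diagLevel_at_j]; simp [hd]; omega))
        · exact Or.inl (diag_orient hi hj (by omega) (by omega)
            (by rw [e1, diagLevel_at_ne (e1 ▸ e3)]; simp [hd]; omega)
            (by rw [e2, diagLevel_at_j]; simp [hd]; omega))
        · exact Or.inl (diag_orient hi hj (by omega) (by omega)
            (by rw [e1, diagLevel_at_ne (e1 ▸ e3)]; simp [hd]; omega)
            (by rw [e2, diagLevel_at_j]; simp [hd]; omega))
  · -- backward
    have bwd : ∀ p q : Fin (n+1) × Fin m, Orient m n d p q → (tri m n d).Adj p q := by
      intro p q h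
      rcases h with ⟨h1, hc⟩ | ⟨i, hi, j, hj, h2p, h2q, h1p, h1q⟩ | ⟨h2, hl⟩
      · left
        rcases hc with ⟨ha, hb2⟩ | ⟨ha, hb2⟩ | ⟨ha, hb2⟩
        · refine ⟨ne_of_col (by omega), Or.inl ⟨h1, Or.inr ?_⟩⟩
          rw [show q.2.val + 1 = m by omega, Nat.mod_self]; omega
        · refine ⟨ne_of_col (by omega), Or.inl ⟨h1, Or.inr ?_⟩⟩
          rw [Nat.mod_eq_of_lt (by omega : q.2.val + 1 < m)]; omega
        · refine ⟨ne_of_col (by omega), Or.inl ⟨h1, Or.inl ?_⟩⟩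
          rw [Nat.mod_eq_of_lt (by omega : p.2.val + 1 < m)]; omega
      · right
        refine ⟨i, hi, j, hj, d i j, rfl, ?_⟩
        rcases sector_cols hm hj with ⟨e1, e2, e3⟩ | ⟨e1, e2, e3⟩ <;>
          rcases Bool.eq_false_or_eq_true (d i j) with hd | hd
        · rw [e1, diagLevel_at_j, hd] at h1p
          rw [e2, diagLevel_at_ne (e2 ▸ e3), hd] at h1q
          left
          simp [cellDiag, hd, Prod.ext_iff]
          refine ⟨⟨by simpa using h1p, by omega⟩, by simpa using h1q, by omega⟩
        · rw [e1, diagLevel_at_j, hd] at h1p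
          rw [e2, diagLevel_at_ne (e2 ▸ e3), hd] at h1q
          left
          simp [cellDiag, hd, Prod.ext_iff]
          refine ⟨⟨by simpa using h1p, by omega⟩, by simpa using h1q, by omega⟩
        · rw [e1, diagLevel_at_ne (e1 ▸ e3), hd] at h1p
          rw [e2, diagLevel_at_j, hd] at h1q
          right
          simp [cellDiag, hd, Prod.ext_iff]
          refine ⟨⟨by simpa using h1q, by omega⟩, by simpa using h1p, by omega⟩
        · rw [e1, diagLevel_at_ne (e1 ▸ e3), hd] at h1p
          rw [e2, diagLevel_at_j, hd] at h1q
          right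
          simp [cellDiag, hd, Prod.ext_iff]
          refine ⟨⟨by simpa using h1q, by omega⟩, by simpa using h1p, by omega⟩
      · left
        exact ⟨ne_of_lev (by omega), Or.inr ⟨h2, by omega⟩⟩
    rintro (h | h)
    · exact bwd u v h
    · exact ((tri m n d).adj_symm (bwd v u h))
end Orientation


section Types

lemma cellTypeA_iff (hm : 4 ≤ m) {j x : ℕ} (hj : j < m) :
    CellTypeA m d (x+1) j ↔ d (x+1) j = d x j := by
  have hc1 : (j+1) % m ≠ j := by
    rcases mod_succ_cases (by omega) hj with ⟨h1, _⟩ | ⟨h1, h2⟩ <;> omega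
  unfold CellTypeA
  rw [Nat.add_sub_cancel]
  constructor
  · intro hA
    rcases Bool.eq_false_or_eq_true (d (x+1) j) with h1 | h1 <;>
      rcases Bool.eq_false_or_eq_true (d x j) with h2 | h2 <;> rw [h1, h2]
    · exact absurd (hA (x+1, j) (by simp [diagEndsSet, h1])) (by simp [diagEndsSet, h2, Prod.ext_iff, hc1.symm])
    · exact absurd (hA (x+1, (j+1)%m) (by simp [diagEndsSet, h1])) (by simp [diagEndsSet, h2, Prod.ext_iff])
  · intro heq p hp hq
    have h2 : d x j = d (x+1) j := heq.symm
    rcases Bool.eq_false_or_eq_true (d (x+1) j) with h1 | h1 <;> rw [h1] at h2 <;>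
      simp [diagEndsSet, h1, h2, Prod.ext_iff] at hp hq <;>
        rcases hp with ⟨hp1, hp2⟩ | ⟨hp1, hp2⟩ <;> rcases hq with ⟨hq1, hq2⟩ | ⟨hq1, hq2⟩ <;>
          generalize hgen : (j+1)%m = c at hp2 hq2 hc1 <;> omega

lemma flip_iff (hm : 4 ≤ m) {j : ℕ} (hj : j < m) (x : ℕ) :
    (d (x+1) j ≠ d x j) ↔
      (sA m d (x+1) j = sA m d x j ∨ sB m d (x+1) j = sB m d x j) := by
  rcases hsrc_j_cases hm hj with ⟨h1, h2⟩ | ⟨h1, h2⟩ <;>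
    rcases Bool.eq_false_or_eq_true (d (x+1) j) with hb1 | hb1 <;>
      rcases Bool.eq_false_or_eq_true (d x j) with hb2 | hb2 <;>
        simp [sA, sB, diagLevel, h1, h2, hb1, hb2] <;> omega

lemma K1 (hm : 4 ≤ m) {j x : ℕ} (hj : j < m)
    (h : sA m d (x+1) j = sA m d x j ∨ sB m d (x+1) j = sB m d x j) :
    vdir m d (x+1) = !(vdir m d x) := by
  have hne : d (x+1) j ≠ d x j := (flip_iff hm hj x).2 h
  have hA : ¬ CellTypeA m d (x+1) j := by
    rw [cellTypeA_iff hm hj]; exact hne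
  have hL : ¬ LayerTypeA m d (x+1) := fun h' => hA (h' j hj)
  simp [vdir, hL]

lemma K2 (hm : 4 ≤ m)
    (huni : ∀ x : ℕ, 1 ≤ x → x < n → ((∀ j < m, CellTypeA m d x j) ∨ (∀ j < m, ¬ CellTypeA m d x j)))
    {j x : ℕ} (hj : j < m) (hxn : x + 1 < n)
    (h1 : sA m d (x+1) j ≠ sA m d x j) (h2 : sB m d (x+1) j ≠ sB m d x j) :
    vdir m d (x+1) = vdir m d x := by
  have heq : d (x+1) j = d x j := by
    by_contra hne
    rcases (flip_iff hm hj x).1 hne with h | h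
    · exact h1 h
    · exact h2 h
  have hA : CellTypeA m d (x+1) j := (cellTypeA_iff hm hj).2 heq
  rcases huni (x+1) (by omega) hxn with hall | hnone
  · have hL : LayerTypeA m d (x+1) := hall
    simp [vdir, hL]
  · exact absurd hA (hnone j hj)

lemma vert_g {p q : Fin (n+1) × Fin m}
    (h : (q.1.val = p.1.val + 1 ∧ vdir m d p.1.val = true) ∨
         (p.1.val = q.1.val + 1 ∧ vdir m d q.1.val = false)) :
    gf m d q.1.val = gf m d p.1.val + 1 := by
  rcases h with ⟨e, hv⟩ | ⟨e, hv⟩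
  · rw [e, gf_up hv]
  · rw [e, gf_down hv]; ring

lemma col_congr {p q : Fin (n+1) × Fin m} (h : p.2 = q.2) :
    p.2.val = q.2.val ∧ r1 m p.2.val = r1 m q.2.val ∧ r2 m p.2.val = r2 m q.2.val := by
  rw [h]; exact ⟨rfl, rfl, rfl⟩

end Types


section Main

lemma no_three_chain (hm : 4 ≤ m)
    (huni : ∀ x : ℕ, 1 ≤ x → x < n →
      ((∀ j < m, CellTypeA m d x j) ∨ (∀ j < m, ¬ CellTypeA m d x j)))
    {x0 x1 x2 x3 : Fin (n+1) × Fin m}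
    (a01 : Orient m n d x0 x1) (a12 : Orient m n d x1 x2)
    (a23 : Orient m n d x2 x3) (a03 : Orient m n d x0 x3) : False := by
  rcases arc_cases hm a03 with ⟨c03, d03⟩ | ⟨j, hj, hs03, hd03, hl03⟩
  · -- shortcut vertical
    have g03 := vert_g d03
    obtain ⟨e03, r03, s03⟩ := col_congr (m := m) c03
    rcases arc_num hm a01 with ⟨c01, g01, f1, s1, e1⟩ | ⟨r01, _, _, _, _, _⟩ <;>
      rcases arc_num hm a12 with ⟨c12, g12, f2, s2, e2⟩ | ⟨r12, _, _, _, _, _⟩ <;>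
        rcases arc_num hm a23 with ⟨c23, g23, f3, s3, e3⟩ | ⟨r23, _, _, _, _, _⟩ <;>
          omega
  · -- shortcut is a sector arc of sector j
    obtain ⟨f1, f2, fmin, fne, _, _⟩ := sector_facts hm hj
    rw [← hs03, ← hd03] at f1 f2 fmin fne
    rcases arc_cases hm a01 with ⟨c01, d01⟩ | ⟨j1, hj1, hs1, hd1, hl1⟩ <;>
      rcases arc_cases hm a12 with ⟨c12, d12⟩ | ⟨j2, hj2, hs2, hd2, hl2⟩ <;>
        rcases arc_cases hm a23 with ⟨c23, d23⟩ | ⟨j3, hj3, hs3, hd3, hl3⟩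
    · -- VVV : no cross at all
      obtain ⟨e1, _, _⟩ := col_congr (m := m) c01
      obtain ⟨e2, _, _⟩ := col_congr (m := m) c12
      obtain ⟨e3, _, _⟩ := col_congr (m := m) c23
      omega
    · -- VVC : position A (cross is the last step)
      obtain ⟨e1, _, _⟩ := col_congr (m := m) c01
      obtain ⟨e2, _, _⟩ := col_congr (m := m) c12
      have hjj : j3 = j := sector_inj hm hj3 hj (by omega) (by omega)
      subst hjj
      rcases d01 with ⟨p1, hv1⟩ | ⟨p1, hv1⟩ <;> rcases d12 with ⟨p2, hv2⟩ | ⟨p2, hv2⟩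
      · -- up-up
        rcases hl03 with h03 | ⟨i, hi, hA0, hB3⟩ <;>
          rcases hl3 with h3h | ⟨i3, hi3, hA2, hB3'⟩
        · have e03 : x0.1.val = x3.1.val := congrArg Fin.val h03
          have e23 : x2.1.val = x3.1.val := congrArg Fin.val h3h
          omega
        · have e03 : x0.1.val = x3.1.val := congrArg Fin.val h03
          have hs3s := sAB_sum (d := d) hm hj3 i3
          omega
        · have e23 : x2.1.val = x3.1.val := congrArg Fin.val h3h
          have hss := sAB_sum (d := d) hm hj3 i
          omega
        · have hss := sAB_sum (d := d) hm hj3 i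
          have hs3s := sAB_sum (d := d) hm hj3 i3
          have hcs := sAB_cases (d := d) hm hj3 i
          have hcs3 := sAB_cases (d := d) hm hj3 i3
          obtain rfl : i3 = i + 1 := by omega
          have hK := K1 (d := d) hm hj3 (x := i) (Or.inr (by omega))
          have ev0 : x0.1.val = i := by omega
          have ev1 : x1.1.val = i + 1 := by omega
          rw [ev0] at hv1
          rw [ev1] at hv2
          rw [hv1, hv2] at hK
          simp at hK
      · -- up-down : impossible verticals
        have e : x2.1.val = x0.1.val := by omega
        rw [e] at hv2
        simp [hv1] at hv2
      · -- down-up : impossible verticals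
        simp [hv2] at hv1
      · -- down-down
        rcases hl03 with h03 | ⟨i, hi, hA0, hB3⟩ <;>
          rcases hl3 with h3h | ⟨i3, hi3, hA2, hB3'⟩
        · have e03 : x0.1.val = x3.1.val := congrArg Fin.val h03
          have e23 : x2.1.val = x3.1.val := congrArg Fin.val h3h
          omega
        · have e03 : x0.1.val = x3.1.val := congrArg Fin.val h03
          have hs3s := sAB_sum (d := d) hm hj3 i3
          omega
        · have e23 : x2.1.val = x3.1.val := congrArg Fin.val h3h
          have hss := sAB_sum (d := d) hm hj3 i
          omega
        · have hss := sAB_sum (d := d) hm hj3 i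
          have hs3s := sAB_sum (d := d) hm hj3 i3
          have hcs := sAB_cases (d := d) hm hj3 i
          have hcs3 := sAB_cases (d := d) hm hj3 i3
          obtain rfl : i = i3 + 1 := by omega
          have hK := K1 (d := d) hm hj3 (x := i3) (Or.inr (by omega))
          have ev1 : x1.1.val = i3 + 1 := by omega
          have ev2 : x2.1.val = i3 := by omega
          rw [ev1] at hv1
          rw [ev2] at hv2
          rw [hv1, hv2] at hK
          simp at hK
    · -- VCV : position B (cross is the middle step)
      obtain ⟨e1, _, _⟩ := col_congr (m := m) c01
      obtain ⟨e3, _, _⟩ := col_congr (m := m) c23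
      have hjj : j2 = j := sector_inj hm hj2 hj (by omega) (by omega)
      subst hjj
      rcases hl03 with h03 | ⟨i, hi, hA0, hB3⟩
      · -- shortcut horizontal
        have e03 : x0.1.val = x3.1.val := congrArg Fin.val h03
        rcases hl2 with h2h | ⟨i2, hi2, hA1, hB2⟩
        · have e12 : x1.1.val = x2.1.val := congrArg Fin.val h2h
          rcases d01 with ⟨p1, hv1⟩ | ⟨p1, hv1⟩ <;> rcases d23 with ⟨p3, hv3⟩ | ⟨p3, hv3⟩
          · omega
          · have e : x3.1.val = x0.1.val := by omega
            rw [e] at hv3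
            simp [hv1] at hv3
          · have e : x2.1.val = x1.1.val := by omega
            rw [e] at hv3
            simp [hv3] at hv1
          · omega
        · have hs2s := sAB_sum (d := d) hm hj2 i2
          rcases d01 with ⟨p1, hv1⟩ | ⟨p1, hv1⟩ <;>
            rcases d23 with ⟨p3, hv3⟩ | ⟨p3, hv3⟩ <;> omega
      · -- shortcut diagonal of cell i
        have hss := sAB_sum (d := d) hm hj2 i
        have hcs := sAB_cases (d := d) hm hj2 i
        rcases hl2 with h2h | ⟨i2, hi2, hA1, hB2⟩
        · have e12 : x1.1.val = x2.1.val := congrArg Fin.val h2h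
          rcases d01 with ⟨p1, hv1⟩ | ⟨p1, hv1⟩ <;>
            rcases d23 with ⟨p3, hv3⟩ | ⟨p3, hv3⟩ <;> omega
        · have hs2s := sAB_sum (d := d) hm hj2 i2
          rcases d01 with ⟨p1, hv1⟩ | ⟨p1, hv1⟩ <;> rcases d23 with ⟨p3, hv3⟩ | ⟨p3, hv3⟩
          · -- up-up : same cell, contradictory diagonal
            obtain rfl : i2 = i := by omega
            omega
          · -- up-down : i2 = i + 1, type A, huniform
            obtain rfl : i2 = i + 1 := by omega
            have hK := K2 (d := d) hm huni hj2 (x := i) (by omega) (by omega) (by omega)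
            rcases hcs with ⟨u1, u2⟩ | ⟨u1, u2⟩
            · have ev0 : x0.1.val = i := by omega
              have ev3 : x3.1.val = i + 1 := by omega
              rw [ev0] at hv1
              rw [ev3] at hv3
              rw [hv1, hv3] at hK
              simp at hK
            · have ev0 : x0.1.val = i + 1 := by omega
              have ev3 : x3.1.val = i := by omega
              rw [ev0] at hv1
              rw [ev3] at hv3
              rw [hv1, hv3] at hK
              simp at hK
          · -- down-up : i = i2 + 1, type A, huniform
            obtain rfl : i = i2 + 1 := by omega
            have hK := K2 (d := d) hm huni hj2 (x := i2) (by omega) (by omega) (by omega)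
            rcases hcs with ⟨u1, u2⟩ | ⟨u1, u2⟩
            · have ev1 : x1.1.val = i2 := by omega
              have ev2 : x2.1.val = i2 + 1 := by omega
              rw [ev1] at hv1
              rw [ev2] at hv3
              rw [hv1, hv3] at hK
              simp at hK
            · have ev1 : x1.1.val = i2 + 1 := by omega
              have ev2 : x2.1.val = i2 := by omega
              rw [ev1] at hv1
              rw [ev2] at hv3
              rw [hv1, hv3] at hK
              simp at hK
          · -- down-down : same cell, contradictory diagonal
            obtain rfl : i2 = i := by omega
            omega
    · -- VCC : two crosses
      obtain ⟨e1, _, _⟩ := col_congr (m := m) c01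
      obtain ⟨q2a, q2b, _, _, _, _⟩ := sector_facts hm hj2
      obtain ⟨q3a, q3b, _, _, _, _⟩ := sector_facts hm hj3
      rw [← hs2, ← hd2] at q2a q2b
      rw [← hs3, ← hd3] at q3a q3b
      rcases fmin with fm | fm <;> omega
    · -- CVV : position C (cross is the first step)
      obtain ⟨e2, _, _⟩ := col_congr (m := m) c12
      obtain ⟨e3, _, _⟩ := col_congr (m := m) c23
      have hjj : j1 = j := sector_inj hm hj1 hj (by omega) (by omega)
      subst hjj
      rcases d12 with ⟨p2, hv2⟩ | ⟨p2, hv2⟩ <;> rcases d23 with ⟨p3, hv3⟩ | ⟨p3, hv3⟩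
      · -- up-up
        rcases hl03 with h03 | ⟨i, hi, hA0, hB3⟩ <;>
          rcases hl1 with h1h | ⟨i1, hi1, hA0', hB1⟩
        · have e03 : x0.1.val = x3.1.val := congrArg Fin.val h03
          have e01 : x0.1.val = x1.1.val := congrArg Fin.val h1h
          omega
        · have e03 : x0.1.val = x3.1.val := congrArg Fin.val h03
          have hs1s := sAB_sum (d := d) hm hj1 i1
          omega
        · have e01 : x0.1.val = x1.1.val := congrArg Fin.val h1h
          have hss := sAB_sum (d := d) hm hj1 i
          omega
        · have hss := sAB_sum (d := d) hm hj1 i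
          have hs1s := sAB_sum (d := d) hm hj1 i1
          have hcs := sAB_cases (d := d) hm hj1 i
          have hcs1 := sAB_cases (d := d) hm hj1 i1
          obtain rfl : i = i1 + 1 := by omega
          have hK := K1 (d := d) hm hj1 (x := i1) (Or.inl (by omega))
          have ev1 : x1.1.val = i1 := by omega
          have ev2 : x2.1.val = i1 + 1 := by omega
          rw [ev1] at hv2
          rw [ev2] at hv3
          rw [hv2, hv3] at hK
          simp at hK
      · -- up-down : impossible verticals
        have e : x3.1.val = x1.1.val := by omega
        rw [e] at hv3
        simp [hv2] at hv3
      · -- down-up : impossible verticals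
        simp [hv3] at hv2
      · -- down-down
        rcases hl03 with h03 | ⟨i, hi, hA0, hB3⟩ <;>
          rcases hl1 with h1h | ⟨i1, hi1, hA0', hB1⟩
        · have e03 : x0.1.val = x3.1.val := congrArg Fin.val h03
          have e01 : x0.1.val = x1.1.val := congrArg Fin.val h1h
          omega
        · have e03 : x0.1.val = x3.1.val := congrArg Fin.val h03
          have hs1s := sAB_sum (d := d) hm hj1 i1
          omega
        · have e01 : x0.1.val = x1.1.val := congrArg Fin.val h1h
          have hss := sAB_sum (d := d) hm hj1 i
          omega
        · have hss := sAB_sum (d := d) hm hj1 i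
          have hs1s := sAB_sum (d := d) hm hj1 i1
          have hcs := sAB_cases (d := d) hm hj1 i
          have hcs1 := sAB_cases (d := d) hm hj1 i1
          obtain rfl : i1 = i + 1 := by omega
          have hK := K1 (d := d) hm hj1 (x := i) (Or.inl (by omega))
          have ev2 : x2.1.val = i + 1 := by omega
          have ev3 : x3.1.val = i := by omega
          rw [ev2] at hv2
          rw [ev3] at hv3
          rw [hv2, hv3] at hK
          simp at hK
    · -- CVC : two crosses
      obtain ⟨e2, _, _⟩ := col_congr (m := m) c12
      obtain ⟨q1a, q1b, _, _, _, _⟩ := sector_facts hm hj1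
      obtain ⟨q3a, q3b, _, _, _, _⟩ := sector_facts hm hj3
      rw [← hs1, ← hd1] at q1a q1b
      rw [← hs3, ← hd3] at q3a q3b
      rcases fmin with fm | fm <;> omega
    · -- CCV : two crosses
      obtain ⟨e3, _, _⟩ := col_congr (m := m) c23
      obtain ⟨q1a, q1b, _, _, _, _⟩ := sector_facts hm hj1
      obtain ⟨q2a, q2b, _, _, _, _⟩ := sector_facts hm hj2
      rw [← hs1, ← hd1] at q1a q1b
      rw [← hs2, ← hd2] at q2a q2b
      rcases fmin with fm | fm <;> omega
    · -- CCC : three crosses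
      obtain ⟨q1a, q1b, _, _, _, _⟩ := sector_facts hm hj1
      obtain ⟨q2a, q2b, _, _, _, _⟩ := sector_facts hm hj2
      obtain ⟨q3a, q3b, _, _, _, _⟩ := sector_facts hm hj3
      rw [← hs1, ← hd1] at q1a q1b
      rw [← hs2, ← hd2] at q2a q2b
      rw [← hs3, ← hd3] at q3a q3b
      rcases fmin with fm | fm <;> omega

end Main

end GCCAux

/-- For a triangulation of a grid-covered cylinder graph with at least four sectors in
which every layer `L 2, ..., L n` has all its cells of the same type, the orientation `O`
is an orientation of the triangulation and is semi-transitive. -/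
theorem orientation_O_semi_transitive (m n : ℕ) (hm : 4 ≤ m) (hn : 1 ≤ n)
    (d : ℕ → ℕ → Bool)
    (huniform : ∀ x : ℕ, 1 ≤ x → x < n →
      ((∀ j < m, CellTypeA m d x j) ∨ (∀ j < m, ¬ CellTypeA m d x j))) :
    IsOrientation (tri m n d) (Orient m n d) ∧ SemiTransitive (Orient m n d) := by
  refine ⟨⟨fun x y h => GCCAux.orient_asymm hm h, fun x y => GCCAux.orient_total hm x y⟩,
    GCCAux.orient_acyclic hm, ?_⟩
  intro k v hc h0k i j hij
  -- reindex the path over ℕ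
  set w : ℕ → Fin (n+1) × Fin m := fun t => v ⟨min t k, by omega⟩ with hw
  have key : ∀ (t : ℕ) (ht : t ≤ k), w t = v ⟨t, by omega⟩ := by
    intro t h
    simp only [hw]
    congr 1
    exact Fin.ext (by simp; omega)
  have hc' : ∀ t, t < k → Orient m n d (w t) (w (t+1)) := by
    intro t ht
    rw [key t (by omega), key (t+1) (by omega)]
    exact hc ⟨t, ht⟩
  have h0k' : Orient m n d (w 0) (w k) := by
    rw [key 0 (by omega), key k (by omega)]
    exact h0k
  have hk3 : k ≤ 3 := GCCAux.k_le_three_nat hm w hc' h0k'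
  have harc : ∀ (a b : ℕ) (ha : a ≤ k) (hb : b ≤ k),
      ((b = a + 1 ∧ b ≤ k) ∨ (a = 0 ∧ b = k)) →
      Orient m n d (v ⟨a, by omega⟩) (v ⟨b, by omega⟩) := by
    intro a b ha hb hcase
    rw [← key a ha, ← key b hb]
    rcases hcase with ⟨rfl, _⟩ | ⟨rfl, rfl⟩
    · exact hc' a (by omega)
    · exact h0k'
  rw [Fin.lt_def] at hij
  have hjk : j.val ≤ k := by omega
  have hik : i.val ≤ k := by omega
  rcases Nat.lt_or_ge k 3 with hk | hk
  · -- k ≤ 2 : every required arc is either a path arc or the shortcut arc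
    have hfin : Orient m n d (v ⟨i.val, by omega⟩) (v ⟨j.val, by omega⟩) := by
      rcases Nat.lt_or_ge (i.val + 1) j.val with hcons | hcons
      · exact harc i.val j.val (by omega) (by omega) (Or.inr ⟨by omega, by omega⟩)
      · exact harc i.val j.val (by omega) (by omega) (Or.inl ⟨by omega, by omega⟩)
    exact hfin
  · -- k = 3 : impossible configuration
    exfalso
    have hk3' : k = 3 := by omega
    rw [hk3'] at h0k'
    exact GCCAux.no_three_chain hm huniform
      (hc' 0 (by omega)) (hc' 1 (by omega)) (hc' 2 (by omega)) h0k'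
end

section
/- The 9-vertex graph M with vertices 1,...,9 and edges {1,2}, {1,3}, {1,4}, {1,5}, {2,3}, {2,5}, {2,6}, {3,6}, {3,4}, {4,5}, {4,6}, {4,7}, {4,8}, {5,6}, {5,8}, {5,9}, {6,9}, {6,7}, {7,8}, {7,9}, {8,9} admits a semi-transitive orientation, namely the orientation 1→2, 1→3, 1→4, 1→5, 2→3, 2→5, 2→6, 3→6, 4→3, 4→5, 4→6, 4→7, 4→8, 5→6, 5→8, 5→9, 6→9, 7→6, 7→8, 7→9, 8→9 is semi-transitive; in particular M is word-representable. -/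
/-- Two letters `x ≠ y` alternate in the word `w` if, after deleting all other letters,
consecutive letters are always distinct (i.e. the result is `xyxy...` or `yxyx...`). -/
def Alternate {V : Type*} [DecidableEq V] (w : List V) (x y : V) : Prop :=
  (w.filter (fun z => z = x ∨ z = y)).Chain' (· ≠ ·)

/-- A graph is word-representable if some word over its vertex alphabet, containing every
vertex, is such that two distinct letters alternate iff they are adjacent. -/
def WordRepresentable {V : Type*} [DecidableEq V] (G : SimpleGraph V) : Prop :=
  ∃ w : List V, (∀ v : V, v ∈ w) ∧ ∀ x y : V, x ≠ y → (Alternate w x y ↔ G.Adj x y)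

/-- The arcs of the given orientation of the 9-vertex graph `M`, with vertices `0,...,8`
representing `1,...,9`: `1→2, 1→3, 1→4, 1→5, 2→3, 2→5, 2→6, 3→6, 4→3, 4→5, 4→6, 4→7,
4→8, 5→6, 5→8, 5→9, 6→9, 7→6, 7→8, 7→9, 8→9` (here written 0-indexed). -/
def arcsM : List (Fin 9 × Fin 9) :=
  [(0, 1), (0, 2), (0, 3), (0, 4), (1, 2), (1, 4), (1, 5), (2, 5), (3, 2), (3, 4),
   (3, 5), (3, 6), (3, 7), (4, 5), (4, 7), (4, 8), (5, 8), (6, 5), (6, 7), (6, 8), (7, 8)]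

/-- The 9-vertex graph `M`, whose edges are the underlying undirected edges of `arcsM`:
`{1,2}, {1,3}, {1,4}, {1,5}, {2,3}, {2,5}, {2,6}, {3,6}, {3,4}, {4,5}, {4,6}, {4,7},
{4,8}, {5,6}, {5,8}, {5,9}, {6,9}, {6,7}, {7,8}, {7,9}, {8,9}` (0-indexed here). -/
def graphM : SimpleGraph (Fin 9) :=
  SimpleGraph.fromRel (fun a b => (a, b) ∈ arcsM)

/-- The given orientation of `M`. -/
def orientM (a b : Fin 9) : Prop := (a, b) ∈ arcsM

/-- The transitive closure of `arcsM`, listed explicitly. -/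
def closM : List (Fin 9 × Fin 9) :=
  [(0, 1), (0, 2), (0, 3), (0, 4), (0, 5), (0, 6), (0, 7), (0, 8), (1, 2), (1, 4),
   (1, 5), (1, 7), (1, 8), (2, 5), (2, 8), (3, 2), (3, 4), (3, 5), (3, 6), (3, 7),
   (3, 8), (4, 5), (4, 7), (4, 8), (5, 8), (6, 5), (6, 7), (6, 8), (7, 8)]

/-- A rank function strictly increasing along arcs. -/
def rkM : Fin 9 → ℕ := ![0, 1, 4, 2, 5, 6, 3, 7, 8]

lemma arcs_rk : ∀ a b : Fin 9, (a, b) ∈ arcsM → rkM a < rkM b := by decide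

lemma arcs_sub_clos : ∀ a b : Fin 9, (a, b) ∈ arcsM → (a, b) ∈ closM := by decide

lemma clos_step : ∀ a b c : Fin 9, (a, b) ∈ closM → (b, c) ∈ arcsM → (a, c) ∈ closM := by
  decide

set_option synthInstance.maxSize 2000 in
set_option synthInstance.maxHeartbeats 400000 in
lemma phiM : ∀ a b x y : Fin 9, (a, b) ∈ arcsM → (a = x ∨ (a, x) ∈ closM) →
    (x, y) ∈ closM → (y = b ∨ (y, b) ∈ closM) → (x, y) ∈ arcsM := by decide

lemma tg_sub_clos {a b : Fin 9} (h : Relation.TransGen orientM a b) : (a, b) ∈ closM := by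
  induction h with
  | single h' => exact arcs_sub_clos _ _ h'
  | tail _ harc ih => exact clos_step _ _ _ ih harc

lemma path_tg {V : Type*} {D : V → V → Prop} {k : ℕ} {v : Fin (k + 1) → V}
    (hv : ∀ i : Fin k, D (v i.castSucc) (v i.succ)) :
    ∀ n (hn : n ≤ k) m (hmn : m < n),
      Relation.TransGen D (v ⟨m, by omega⟩) (v ⟨n, by omega⟩) := by
  intro n
  induction n with
  | zero => intro hn m hmn; omega
  | succ n ih =>
    intro hn m hmn
    have harc : D (v ⟨n, by omega⟩) (v ⟨n + 1, by omega⟩) := hv ⟨n, by omega⟩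
    rcases Nat.lt_succ_iff_lt_or_eq.mp hmn with h | h
    · exact (ih (by omega) m h).tail harc
    · subst h; exact Relation.TransGen.single harc

/-- Boolean checker for `Chain' (· ≠ ·)`. -/
def nodup2 : List (Fin 9) → Bool
  | [] => true
  | [_] => true
  | a :: b :: t => a != b && nodup2 (b :: t)

lemma nodup2_iff : ∀ l : List (Fin 9), l.Chain' (· ≠ ·) ↔ nodup2 l = true
  | [] => by simp [nodup2, List.Chain']
  | [a] => by simp [nodup2, List.Chain']
  | a :: b :: t => by
    rw [List.Chain', List.isChain_cons_cons, nodup2, Bool.and_eq_true, bne_iff_ne, ← nodup2_iff (b :: t), List.Chain']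

lemma word_altB : ∀ x y : Fin 9, x ≠ y →
    (nodup2 (([2, 5, 8, 0, 3, 6, 1, 4, 2, 5, 0, 1, 7, 3, 2, 8, 4, 0] : List (Fin 9)).filter
        (fun z => z = x ∨ z = y)) = true ↔
      (x ≠ y ∧ ((x, y) ∈ arcsM ∨ (y, x) ∈ arcsM))) := by decide

lemma word_alt : ∀ x y : Fin 9, x ≠ y →
    (Alternate [2, 5, 8, 0, 3, 6, 1, 4, 2, 5, 0, 1, 7, 3, 2, 8, 4, 0] x y ↔
      (x ≠ y ∧ ((x, y) ∈ arcsM ∨ (y, x) ∈ arcsM))) := fun x y h =>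
  (nodup2_iff _).trans (word_altB x y h)

/-- The orientation `orientM` of the graph `M` is a semi-transitive orientation of `M`;
in particular, `M` is word-representable. -/
theorem graphM_semi_transitive_word_representable :
    IsOrientation graphM orientM ∧ SemiTransitive orientM ∧ WordRepresentable graphM := by
  refine ⟨⟨?_, ?_⟩, ⟨?_, ?_⟩, ?_⟩
  · exact (by decide : ∀ x y : Fin 9, (x, y) ∈ arcsM → ¬ (y, x) ∈ arcsM)
  · intro x y
    show (SimpleGraph.fromRel _).Adj x y ↔ _
    rw [SimpleGraph.fromRel_adj]
    exact (by decide : ∀ x y : Fin 9,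
      (x ≠ y ∧ ((x, y) ∈ arcsM ∨ (y, x) ∈ arcsM)) ↔ ((x, y) ∈ arcsM ∨ (y, x) ∈ arcsM)) x y
  · -- acyclic
    intro a h
    have : rkM a < rkM a := by
      have key : ∀ b : Fin 9, Relation.TransGen orientM a b → rkM a < rkM b := by
        intro b hb
        induction hb with
        | single h' => exact arcs_rk _ _ h'
        | tail _ harc ih => exact ih.trans (arcs_rk _ _ harc)
      exact key a h
    exact lt_irrefl _ this
  · -- shortcut-free
    intro k v hv h0 i j hij
    have hij' : (i : ℕ) < (j : ℕ) := hij
    have h0eq : v 0 = v ⟨0, Nat.succ_pos k⟩ :=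
      congrArg v (Fin.ext (by simp))
    have hxy : (v i, v j) ∈ closM := by
      have := path_tg hv j.val j.is_le i.val hij'
      exact tg_sub_clos this
    have hax : v 0 = v i ∨ (v 0, v i) ∈ closM := by
      rcases Nat.eq_zero_or_pos i.val with h | h
      · left; exact congrArg v (Fin.ext (by simp [h]))
      · right
        have := path_tg hv i.val i.is_le 0 h
        rw [h0eq]
        exact tg_sub_clos this
    have hyb : v j = v (Fin.last k) ∨ (v j, v (Fin.last k)) ∈ closM := by
      rcases eq_or_lt_of_le j.is_le with h | h
      · left; exact congrArg v (Fin.ext (by simp [h]))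
      · right
        have := path_tg hv k le_rfl j.val h
        exact tg_sub_clos this
    exact phiM (v 0) (v (Fin.last k)) (v i) (v j) h0 hax hxy hyb
  · -- word-representable
    refine ⟨[2, 5, 8, 0, 3, 6, 1, 4, 2, 5, 0, 1, 7, 3, 2, 8, 4, 0], by decide, ?_⟩
    intro x y hxy
    rw [show graphM.Adj x y ↔ (x ≠ y ∧ ((x, y) ∈ arcsM ∨ (y, x) ∈ arcsM)) from
      SimpleGraph.fromRel_adj _ x y]
    exact word_alt x y hxy
end

section
/- Let D be a semi-transitive orientation of a finite simple graph that contains no transitively oriented induced subgraph on four or more vertices. Then the digraph obtained from D by deleting any single arc is still acyclic and shortcut-free, i.e., is a semi-transitive orientation of the graph with the corresponding edge removed. -/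
/-- Let `D` be a semi-transitive orientation of a finite simple graph `G` that contains no
transitively oriented induced subgraph on four or more vertices (a set `S` of vertices
induces a transitively oriented subgraph if whenever `u → v` and `v → w` are arcs with
`u, v, w ∈ S`, then `u → w` is an arc). Then deleting any single arc `a → b` from `D`
yields an acyclic, shortcut-free digraph, i.e. a semi-transitive orientation of the graph
`G` with the edge `{a, b}` removed. -/
theorem semi_transitive_minus_arc
    {V : Type*} [Fintype V] (G : SimpleGraph V) (D : V → V → Prop)
    (hor : IsOrientation G D) (hst : SemiTransitive D)
    (htrans : ¬ ∃ S : Finset V, 4 ≤ S.card ∧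
      ∀ u ∈ S, ∀ v ∈ S, ∀ w ∈ S, D u v → D v w → D u w)
    (a b : V) (hab : D a b) :
    IsOrientation (G.deleteEdges {s(a, b)}) (fun u v => D u v ∧ ¬(u = a ∧ v = b)) ∧
    SemiTransitive (fun u v => D u v ∧ ¬(u = a ∧ v = b)) := by
  classical
  obtain ⟨hasym, hadj⟩ := hor
  obtain ⟨hacyc, hsf⟩ := hst
  refine ⟨⟨?_, ?_⟩, ?_, ?_⟩
  · rintro x y ⟨hxy, _⟩ ⟨hyx, _⟩; exact hasym x y hxy hyx
  · intro x y
    simp only [SimpleGraph.deleteEdges_adj, Set.mem_singleton_iff, Sym2.eq_iff, hadj]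
    constructor
    · rintro ⟨hd, hns⟩
      cases hd with
      | inl h => exact Or.inl ⟨h, fun ⟨h1, h2⟩ => hns (Or.inl ⟨h1, h2⟩)⟩
      | inr h => exact Or.inr ⟨h, fun ⟨h1, h2⟩ => hns (Or.inr ⟨h2, h1⟩)⟩
    · rintro (⟨h, hne⟩ | ⟨h, hne⟩)
      · refine ⟨Or.inl h, ?_⟩
        rintro (⟨h1, h2⟩ | ⟨h1, h2⟩)
        · exact hne ⟨h1, h2⟩
        · subst h1; subst h2; exact hasym _ _ hab h
      · refine ⟨Or.inr h, ?_⟩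
        rintro (⟨h1, h2⟩ | ⟨h1, h2⟩)
        · subst h1; subst h2; exact hasym _ _ hab h
        · exact hne ⟨h2, h1⟩
  · intro v hv
    exact hacyc v (Relation.TransGen.mono (fun x y (h : D x y ∧ ¬(x = a ∧ y = b)) => h.1) v v hv)
  · intro k v hpath hlast
    have hpathD : ∀ i : Fin k, D (v i.castSucc) (v i.succ) := fun i => (hpath i).1
    have hall : ∀ i j : Fin (k + 1), i < j → D (v i) (v j) := hsf k v hpathD hlast.1
    have horder : ∀ i j : Fin (k + 1), D (v i) (v j) → i < j := by
      intro i j hij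
      rcases lt_trichotomy i j with h | h | h
      · exact h
      · subst h; exact absurd (Relation.TransGen.single hij) (hacyc _)
      · exact absurd ((Relation.TransGen.single hij).trans
          (Relation.TransGen.single (hall j i h))) (hacyc _)
    have hkle : k ≤ 2 := by
      by_contra hk
      push_neg at hk
      have hinj : Function.Injective v := by
        intro i j hij
        by_contra hne
        rcases lt_or_gt_of_ne hne with h | h
        · exact hacyc _ (Relation.TransGen.single (hij ▸ hall i j h))
        · exact hacyc _ (Relation.TransGen.single (hij ▸ hall j i h))
      refine htrans ⟨Finset.image v Finset.univ, ?_, ?_⟩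
      · rw [Finset.card_image_of_injective _ hinj, Finset.card_univ, Fintype.card_fin]
        omega
      · intro u hu w hw x hx huw hwx
        obtain ⟨i, -, rfl⟩ := Finset.mem_image.mp hu
        obtain ⟨j, -, rfl⟩ := Finset.mem_image.mp hw
        obtain ⟨l, -, rfl⟩ := Finset.mem_image.mp hx
        exact hall i l (lt_trans (horder i j huw) (horder j l hwx))
    intro i j hij
    refine ⟨hall i j hij, ?_⟩
    have hij' : (i : ℕ) < (j : ℕ) := hij
    have hjk : (j : ℕ) < k + 1 := j.isLt
    rcases Nat.lt_or_ge ((i : ℕ) + 1) (j : ℕ) with hc | hc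
    · have hi0 : i = 0 := Fin.ext (by rw [Fin.val_zero]; omega)
      have hjl : j = Fin.last k := Fin.ext (by simp [Fin.last]; omega)
      rw [hi0, hjl]
      exact hlast.2
    · have hje : (j : ℕ) = (i : ℕ) + 1 := by omega
      have hik : (i : ℕ) < k := by omega
      have h2 := (hpath ⟨(i : ℕ), hik⟩).2
      have e1 : (⟨(i : ℕ), hik⟩ : Fin k).castSucc = i := Fin.ext rfl
      have e2 : (⟨(i : ℕ), hik⟩ : Fin k).succ = j := Fin.ext (by simp [Fin.succ]; omega)
      rw [e1, e2] at h2
      exact h2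
end

section
/- The graph H1 on vertex set {1,2,3,4,5,6,7} with edges {1,2}, {1,3}, {1,4}, {1,5}, {3,4}, {4,5}, {3,5}, {2,5}, {3,6}, {5,6}, {6,7}, {5,7}, {4,7} is not word-representable. -/
/-- The 7-vertex graph `H1` with vertices `0,...,6` (representing `1,...,7`) and the
thirteen edges `{1,2}, {1,3}, {1,4}, {1,5}, {3,4}, {4,5}, {3,5}, {2,5}, {3,6}, {5,6},
{6,7}, {5,7}, {4,7}` (here written 0-indexed). -/
def graphH1 : SimpleGraph (Fin 7) :=
  SimpleGraph.fromRel (fun a b => (a, b) ∈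
    ([(0, 1), (0, 2), (0, 3), (0, 4), (2, 3), (3, 4), (2, 4), (1, 4),
      (2, 5), (4, 5), (5, 6), (4, 6), (3, 6)] : List (Fin 7 × Fin 7)))

/-! ### Auxiliary machinery

We characterise alternation of `x` and `y` in `w` arithmetically: `x` and `y` alternate
iff there is an integer `e` such that for every prefix `p` of `w` the difference
`count x p - count y p` lies in `{e - 1, e}`.  Using the apex vertex `4` of `H1`
(adjacent to all other vertices), these interval bounds can be pinned down so that the
alternation relation induces a quasi-transitive orientation of the link of the apex,
which is impossible for `H1`. -/

variable {V : Type*} [DecidableEq V]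

/-- Integer difference of letter counts. -/
def Dd (x y : V) (p : List V) : ℤ := (p.count x : ℤ) - (p.count y : ℤ)

/-- All prefix count differences lie in `{e-1, e}`. -/
def Bnd (w : List V) (x y : V) (e : ℤ) : Prop :=
  ∀ p, p <+: w → e - 1 ≤ Dd x y p ∧ Dd x y p ≤ e

lemma dd_cons_left {x y : V} (hxy : y ≠ x) (p : List V) :
    Dd x y (x :: p) = Dd x y p + 1 := by
  simp [Dd, List.count_cons, hxy, Ne.symm hxy]; ring

lemma dd_cons_right {x y : V} (hxy : x ≠ y) (p : List V) :
    Dd x y (y :: p) = Dd x y p - 1 := by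
  simp [Dd, List.count_cons, hxy, Ne.symm hxy]; ring

lemma dd_cons_other {x y c : V} (hx : ¬ c = x) (hy : ¬ c = y) (p : List V) :
    Dd x y (c :: p) = Dd x y p := by
  simp [Dd, List.count_cons, hx, hy]

lemma dd_nil (x y : V) : Dd x y [] = 0 := by simp [Dd]

/-- Head value of the filtered word, as the candidate bound `e`. -/
def Eh (x : V) (l : List V) : ℤ := if l.head? = some x then 1 else 0

omit [DecidableEq V] in
lemma filter_head_decomp {q : V → Bool} {a : V} :
    ∀ {t : List V}, (t.filter q).head? = some a →
      ∃ t₁ t₂, t = t₁ ++ a :: t₂ ∧ t₁.filter q = [] := by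
  intro t
  induction t with
  | nil => simp
  | cons c s ih =>
    intro h
    by_cases hc : q c
    · rw [List.filter_cons, if_pos hc] at h
      simp only [List.head?_cons, Option.some.injEq] at h
      exact ⟨[], s, by simp [h], rfl⟩
    · rw [List.filter_cons, if_neg hc] at h
      obtain ⟨t₁, t₂, rfl, hf⟩ := ih h
      exact ⟨c :: t₁, t₂, rfl, by rw [List.filter_cons, if_neg hc, hf]⟩

lemma count_zero_of_filter_nil {q : V → Bool} {t : List V} {x : V}
    (hf : t.filter q = []) (hx : q x = true) : t.count x = 0 := by
  rw [List.count_eq_zero]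
  intro hmem
  have : x ∈ t.filter q := List.mem_filter.mpr ⟨hmem, hx⟩
  rw [hf] at this; simp at this

/-- Alternation implies the prefix-count bounds. -/
lemma altA_aux {x y : V} (hxy : x ≠ y) :
    ∀ w : List V, (w.filter (fun z => z = x ∨ z = y)).Chain' (· ≠ ·) →
    ∀ p, p <+: w →
      Eh x (w.filter (fun z => z = x ∨ z = y)) - 1 ≤ Dd x y p ∧
      Dd x y p ≤ Eh x (w.filter (fun z => z = x ∨ z = y)) := by
  intro w
  induction w with
  | nil =>
    intro _ p hp
    rw [List.prefix_nil] at hp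
    subst hp
    simp [Eh, dd_nil]
  | cons c t ih =>
    intro hch p hp
    by_cases hc : c = x ∨ c = y
    · have hfil : (c :: t).filter (fun z => z = x ∨ z = y) =
        c :: t.filter (fun z => z = x ∨ z = y) := by
        simp [List.filter_cons, hc]
      rw [hfil] at hch ⊢
      simp only [List.Chain', List.isChain_cons] at hch
      obtain ⟨hhd, hch'⟩ := hch
      rcases hc with hc | hc
      · -- c = x
        have hEt : Eh x (t.filter (fun z => z = x ∨ z = y)) = 0 := by
          unfold Eh
          cases hh : (t.filter (fun z => z = x ∨ z = y)).head? with
          | none => simp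
          | some b =>
            have hb := hhd b hh
            rw [hc] at hb
            simp only [if_neg (fun hbx : some b = some x =>
              hb (by injection hbx with h; exact h.symm))]
        have hE : Eh x (c :: t.filter (fun z => z = x ∨ z = y)) = 1 := by
          simp [Eh, hc]
        rw [hE]
        rw [List.prefix_cons_iff] at hp
        rcases hp with rfl | ⟨s, rfl, hs⟩
        · simp [dd_nil]
        · have hih := ih hch' s hs
          rw [hEt] at hih
          rw [hc, dd_cons_left (Ne.symm hxy)]
          omega
      · -- c = y
        have hE : Eh x (c :: t.filter (fun z => z = x ∨ z = y)) = 0 := by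
          simp [Eh, hc, Ne.symm hxy]
        rw [hE]
        rw [List.prefix_cons_iff] at hp
        rcases hp with rfl | ⟨s, rfl, hs⟩
        · simp [dd_nil]
        · rw [hc, dd_cons_right hxy]
          cases hh : (t.filter (fun z => z = x ∨ z = y)).head? with
          | none =>
            rw [List.head?_eq_none_iff] at hh
            have hcx : (s.count x : ℤ) = 0 ∧ (s.count y : ℤ) = 0 := by
              constructor <;>
              · norm_cast
                rw [List.count_eq_zero]
                intro hmem
                have hmem' := hs.sublist.mem hmem
                exact List.count_eq_zero.mp (count_zero_of_filter_nil hh (by simp)) hmem'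
            have : Dd x y s = 0 := by rw [Dd, hcx.1, hcx.2]; ring
            omega
          | some b =>
            have hb := hhd b hh
            rw [hc] at hb
            have hbq : (fun z => decide (z = x ∨ z = y)) b = true := by
              have hbmem : b ∈ t.filter (fun z => decide (z = x ∨ z = y)) := by
                cases hf : t.filter (fun z => decide (z = x ∨ z = y)) with
                | nil => rw [hf] at hh; simp at hh
                | cons a s' =>
                  rw [hf] at hh
                  simp only [List.head?_cons, Option.some.injEq] at hh
                  rw [← hh]; exact List.mem_cons_self (a := a) (l := s')
              exact (List.mem_filter.mp hbmem).2
            have hbx : b = x := by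
              simp only [decide_eq_true_eq] at hbq
              rcases hbq with h | h
              · exact h
              · exact (hb h.symm).elim
            have hEt : Eh x (t.filter (fun z => z = x ∨ z = y)) = 1 := by
              unfold Eh; rw [hh, hbx]; simp
            have hih := ih hch' s hs
            rw [hEt] at hih
            omega
    · push_neg at hc
      have hfil : (c :: t).filter (fun z => z = x ∨ z = y) =
        t.filter (fun z => z = x ∨ z = y) := by
        simp [List.filter_cons, hc.1, hc.2]
      rw [hfil] at hch ⊢
      rw [List.prefix_cons_iff] at hp
      rcases hp with rfl | ⟨s, rfl, hs⟩
      · constructor <;> unfold Eh <;> split <;> simp [dd_nil]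
      · rw [dd_cons_other hc.1 hc.2]
        exact ih hch s hs

/-- Alternation gives prefix-count bounds for some `e`. -/
lemma alt_bnd {x y : V} (hxy : x ≠ y) {w : List V} (h : Alternate w x y) :
    ∃ e : ℤ, Bnd w x y e :=
  ⟨_, fun p hp => altA_aux hxy w h p hp⟩

/-- Conversely, prefix-count bounds imply alternation. -/
lemma altB {x y : V} (hxy : x ≠ y) :
    ∀ (w : List V) (e : ℤ), Bnd w x y e → Alternate w x y := by
  intro w
  induction w with
  | nil => intro e _; simp [Alternate, List.Chain']
  | cons c t ih =>
    intro e hb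
    unfold Alternate
    have hsub : ∀ p, p <+: t → c :: p <+: c :: t := by
      intro p ⟨s, hs⟩; exact ⟨s, by rw [List.cons_append, hs]⟩
    by_cases hc : c = x ∨ c = y
    · have hfil : (c :: t).filter (fun z => z = x ∨ z = y) =
        c :: t.filter (fun z => z = x ∨ z = y) := by
        simp [List.filter_cons, hc]
      rw [hfil]; simp only [List.Chain', List.isChain_cons]
      rcases hc with hc | hc
      · constructor
        · intro b hb'
          have hh : (t.filter (fun z => decide (z = x ∨ z = y))).head? = some b :=
            Option.mem_def.mp hb'
          have hbq := List.mem_filter.mp (List.mem_of_mem_head? hb')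
          simp only [decide_eq_true_eq] at hbq
          rcases hbq.2 with hbx | hby
          · exfalso
            obtain ⟨t₁, t₂, rfl, hf1⟩ := filter_head_decomp (a := b) hh
            have hx1 : t₁.count x = 0 := count_zero_of_filter_nil hf1 (by simp)
            have hy1 : t₁.count y = 0 := count_zero_of_filter_nil hf1 (by simp)
            have hpre : c :: (t₁ ++ [b]) <+: c :: (t₁ ++ b :: t₂) :=
              hsub _ ⟨t₂, by simp⟩
            have h2 := hb _ hpre
            have h0 := hb [] ⟨_, rfl⟩
            rw [dd_nil] at h0
            have hdd : Dd x y (c :: (t₁ ++ [b])) = 2 := by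
              rw [hc, hbx]
              simp [Dd, List.count_cons, List.count_append, hx1, hy1, hxy, Ne.symm hxy]
            omega
          · rw [hc, hby]; exact hxy
        · apply ih (e - 1)
          intro p hp
          have := hb (c :: p) (hsub p hp)
          rw [hc, dd_cons_left (Ne.symm hxy)] at this
          omega
      · constructor
        · intro b hb'
          have hh : (t.filter (fun z => decide (z = x ∨ z = y))).head? = some b :=
            Option.mem_def.mp hb'
          have hbq := List.mem_filter.mp (List.mem_of_mem_head? hb')
          simp only [decide_eq_true_eq] at hbq
          rcases hbq.2 with hbx | hby
          · rw [hc, hbx]; exact Ne.symm hxy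
          · exfalso
            obtain ⟨t₁, t₂, rfl, hf1⟩ := filter_head_decomp (a := b) hh
            have hx1 : t₁.count x = 0 := count_zero_of_filter_nil hf1 (by simp)
            have hy1 : t₁.count y = 0 := count_zero_of_filter_nil hf1 (by simp)
            have hpre : c :: (t₁ ++ [b]) <+: c :: (t₁ ++ b :: t₂) :=
              hsub _ ⟨t₂, by simp⟩
            have h2 := hb _ hpre
            have h0 := hb [] ⟨_, rfl⟩
            rw [dd_nil] at h0
            have hdd : Dd x y (c :: (t₁ ++ [b])) = -2 := by
              rw [hc, hby]
              simp [Dd, List.count_cons, List.count_append, hx1, hy1, hxy, Ne.symm hxy]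
            omega
        · apply ih (e + 1)
          intro p hp
          have := hb (c :: p) (hsub p hp)
          rw [hc, dd_cons_right hxy] at this
          omega
    · push_neg at hc
      have hfil : (c :: t).filter (fun z => z = x ∨ z = y) =
        t.filter (fun z => z = x ∨ z = y) := by
        simp [List.filter_cons, hc.1, hc.2]
      rw [hfil]
      apply ih e
      intro p hp
      have := hb (c :: p) (hsub p hp)
      rwa [dd_cons_other hc.1 hc.2] at this

/-- The count difference of `x` against the apex, at the prefix before the first
occurrence of the apex, is exactly the bound `e`. -/
lemma pin {w A t' : List V} {x v₀ : V} {e : ℤ} (hw : w = A ++ v₀ :: t')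
    (hxv : x ≠ v₀) (hb : Bnd w x v₀ e) : Dd x v₀ A = e := by
  have h1 := hb A ⟨v₀ :: t', hw.symm⟩
  have h2 := hb (A ++ [v₀]) ⟨t', by rw [hw]; simp⟩
  have h3 : Dd x v₀ (A ++ [v₀]) = Dd x v₀ A - 1 := by
    simp [Dd, List.count_append, List.count_cons, hxv, Ne.symm hxv]
    ring
  omega

/-- Every edge of the link of the apex is oriented one way or the other. -/
lemma orientL {w A t' : List V} {x y v₀ : V} {ex ey : ℤ} (hw : w = A ++ v₀ :: t')
    (hxv : x ≠ v₀) (hyv : y ≠ v₀) (hxy : x ≠ y)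
    (hbx : Bnd w x v₀ ex) (hby : Bnd w y v₀ ey) (halt : Alternate w x y) :
    Bnd w x y (ex - ey + 1) ∨ Bnd w y x (ey - ex + 1) := by
  obtain ⟨e, he⟩ := alt_bnd hxy halt
  have px := pin hw hxv hbx
  have py := pin hw hyv hby
  have hA : Dd x y A = ex - ey := by
    have h : Dd x y A = Dd x v₀ A - Dd y v₀ A := by simp [Dd]
    rw [h, px, py]
  have hbA := he A ⟨v₀ :: t', hw.symm⟩
  rcases (by omega : e = ex - ey + 1 ∨ e = ex - ey) with h | h
  · left; exact h ▸ he
  · right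
    intro p hp
    have h1 := he p hp
    have hrev : Dd y x p = - Dd x y p := by simp [Dd]
    omega

/-- Quasi-transitivity: two aligned oriented edges force an aligned oriented edge. -/
lemma transO {w : List V} {x y z v₀ : V} {ex ey ez : ℤ}
    (hbx : Bnd w x v₀ ex) (hbz : Bnd w z v₀ ez)
    (h1 : Bnd w x y (ex - ey + 1)) (h2 : Bnd w y z (ey - ez + 1)) :
    Bnd w x z (ex - ez + 1) := by
  intro p hp
  have a1 := hbx p hp
  have a2 := hbz p hp
  have a3 := h1 p hp
  have a4 := h2 p hp
  have i1 : Dd x z p = Dd x y p + Dd y z p := by simp [Dd]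
  have i2 : Dd x z p = Dd x v₀ p - Dd z v₀ p := by simp [Dd]
  omega

/-- The graph `H1` is not word-representable. -/
theorem graphH1_not_word_representable : ¬ WordRepresentable graphH1 := by
  rintro ⟨w, hall, hiff⟩
  have hadj : ∀ a b : Fin 7, graphH1.Adj a b ↔ a ≠ b ∧
      (((a, b) ∈ ([(0, 1), (0, 2), (0, 3), (0, 4), (2, 3), (3, 4), (2, 4), (1, 4),
        (2, 5), (4, 5), (5, 6), (4, 6), (3, 6)] : List (Fin 7 × Fin 7))) ∨
       ((b, a) ∈ ([(0, 1), (0, 2), (0, 3), (0, 4), (2, 3), (3, 4), (2, 4), (1, 4),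
        (2, 5), (4, 5), (5, 6), (4, 6), (3, 6)] : List (Fin 7 × Fin 7)))) := by
    intro a b
    exact SimpleGraph.fromRel_adj _ a b
  obtain ⟨A, t', hw⟩ := List.append_of_mem (hall 4)
  -- alternation with the apex vertex 4, which is adjacent to all other vertices
  have halt4 : ∀ x : Fin 7, x ≠ 4 → Alternate w x 4 := by
    intro x hx
    exact (hiff x 4 hx).mpr (by rw [hadj]; fin_cases x <;> simp_all)
  obtain ⟨e0, hb0⟩ := alt_bnd (by decide : (0 : Fin 7) ≠ 4) (halt4 0 (by decide))
  obtain ⟨e1, hb1⟩ := alt_bnd (by decide : (1 : Fin 7) ≠ 4) (halt4 1 (by decide))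
  obtain ⟨e2, hb2⟩ := alt_bnd (by decide : (2 : Fin 7) ≠ 4) (halt4 2 (by decide))
  obtain ⟨e3, hb3⟩ := alt_bnd (by decide : (3 : Fin 7) ≠ 4) (halt4 3 (by decide))
  obtain ⟨e5, hb5⟩ := alt_bnd (by decide : (5 : Fin 7) ≠ 4) (halt4 5 (by decide))
  obtain ⟨e6, hb6⟩ := alt_bnd (by decide : (6 : Fin 7) ≠ 4) (halt4 6 (by decide))
  -- orientations of the edges of the link of the apex
  have haltE : ∀ x y : Fin 7, x ≠ y → graphH1.Adj x y → Alternate w x y :=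
    fun x y hne ha => (hiff x y hne).mpr ha
  have o25 := orientL hw (by decide) (by decide) (by decide) hb2 hb5
    (haltE 2 5 (by decide) ((hadj 2 5).mpr (by decide)))
  have o56 := orientL hw (by decide) (by decide) (by decide) hb5 hb6
    (haltE 5 6 (by decide) ((hadj 5 6).mpr (by decide)))
  have o36 := orientL hw (by decide) (by decide) (by decide) hb3 hb6
    (haltE 3 6 (by decide) ((hadj 3 6).mpr (by decide)))
  have o23 := orientL hw (by decide) (by decide) (by decide) hb2 hb3
    (haltE 2 3 (by decide) ((hadj 2 3).mpr (by decide)))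
  have o02 := orientL hw (by decide) (by decide) (by decide) hb0 hb2
    (haltE 0 2 (by decide) ((hadj 0 2).mpr (by decide)))
  have o03 := orientL hw (by decide) (by decide) (by decide) hb0 hb3
    (haltE 0 3 (by decide) ((hadj 0 3).mpr (by decide)))
  have o01 := orientL hw (by decide) (by decide) (by decide) hb0 hb1
    (haltE 0 1 (by decide) ((hadj 0 1).mpr (by decide)))
  -- the quasi-transitivity step producing adjacency
  have step : ∀ (x y z : Fin 7) (ex ey ez : ℤ), x ≠ z →
      Bnd w x 4 ex → Bnd w z 4 ez → Bnd w x y (ex - ey + 1) →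
      Bnd w y z (ey - ez + 1) → graphH1.Adj x z := by
    intro x y z ex ey ez hne hbx hbz h1 h2
    exact (hiff x z hne).mp (altB hne w (ex - ez + 1) (transO hbx hbz h1 h2))
  have nadj : ∀ a b : Fin 7, ((a, b) ∉ ([(0, 1), (0, 2), (0, 3), (0, 4), (2, 3),
      (3, 4), (2, 4), (1, 4), (2, 5), (4, 5), (5, 6), (4, 6), (3, 6)] :
      List (Fin 7 × Fin 7)) ∧ (b, a) ∉ ([(0, 1), (0, 2), (0, 3), (0, 4), (2, 3),
      (3, 4), (2, 4), (1, 4), (2, 5), (4, 5), (5, 6), (4, 6), (3, 6)] :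
      List (Fin 7 × Fin 7))) → ¬ graphH1.Adj a b := by
    intro a b hmem hA
    rw [hadj] at hA
    exact absurd hA.2 (by simpa using hmem.elim fun h1 h2 => not_or.mpr ⟨h1, h2⟩)
  -- the finite case analysis: the link of the apex admits no quasi-transitive
  -- orientation, contradiction
  rcases o25 with h25 | h52
  · rcases o56 with h56 | h65
    · exact nadj 2 6 (by decide) (step 2 5 6 e2 e5 e6 (by decide) hb2 hb6 h25 h56)
    · rcases o36 with h36 | h63
      · exact nadj 3 5 (by decide) (step 3 6 5 e3 e6 e5 (by decide) hb3 hb5 h36 h65)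
      · rcases o23 with h23 | h32
        · rcases o02 with h02 | h20
          · exact nadj 0 5 (by decide) (step 0 2 5 e0 e2 e5 (by decide) hb0 hb5 h02 h25)
          · rcases o03 with h03 | h30
            · rcases o01 with h01 | h10
              · exact nadj 2 1 (by decide) (step 2 0 1 e2 e0 e1 (by decide) hb2 hb1 h20 h01)
              · exact nadj 1 3 (by decide) (step 1 0 3 e1 e0 e3 (by decide) hb1 hb3 h10 h03)
            · exact nadj 6 0 (by decide) (step 6 3 0 e6 e3 e0 (by decide) hb6 hb0 h63 h30)
        · exact nadj 6 2 (by decide) (step 6 3 2 e6 e3 e2 (by decide) hb6 hb2 h63 h32)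
  · rcases o56 with h56 | h65
    · rcases o36 with h36 | h63
      · rcases o23 with h23 | h32
        · exact nadj 2 6 (by decide) (step 2 3 6 e2 e3 e6 (by decide) hb2 hb6 h23 h36)
        · rcases o02 with h02 | h20
          · rcases o03 with h03 | h30
            · exact nadj 0 6 (by decide) (step 0 3 6 e0 e3 e6 (by decide) hb0 hb6 h03 h36)
            · rcases o01 with h01 | h10
              · exact nadj 3 1 (by decide) (step 3 0 1 e3 e0 e1 (by decide) hb3 hb1 h30 h01)
              · exact nadj 1 2 (by decide) (step 1 0 2 e1 e0 e2 (by decide) hb1 hb2 h10 h02)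
          · exact nadj 5 0 (by decide) (step 5 2 0 e5 e2 e0 (by decide) hb5 hb0 h52 h20)
      · exact nadj 5 3 (by decide) (step 5 6 3 e5 e6 e3 (by decide) hb5 hb3 h56 h63)
    · exact nadj 6 2 (by decide) (step 6 5 2 e6 e5 e2 (by decide) hb6 hb2 h65 h52)
end
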